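/- arXiv:1401.7131 — 2 statements merged into one kernel-verified Lean document; each statement's English description precedes it below -/
import Mathlib

section
/- Let P ⊂ ℝ² be a bounded open set, ε > 0, S_ε = { z ∈ P : dist(z,∂P) = ε }. Let p, p' ∈ ∂P, z ∈ m_ε(p), z' ∈ m_ε(p') with d(p,z) = ε and d(p',z') = ε, and suppose the open segments (p,z) and (p',z') intersect at a single point q with q ∉ {p, z, p', z'} and z ≠ z'. Then, assuming without loss of generality d(q,z) ≥ d(q,z'), the path from p through q to z' has length d(p,q) + d(q,z') ≤ d(p,z), yielding d(p, z') < d(p, z) unless p, q, z' are collinear; in the non-collinear case this contradicts z ∈ m_ε(p). Consequently, segments realizing shortest distances from boundary points to S_ε intersect only at common endpoints. -/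
open Metric Set

noncomputable section

abbrev E2 := EuclideanSpace ℝ (Fin 2)

lemma aux10 (S : Set E2) (p z z' q : E2) (hz'S : z' ∈ S)
    (hzmin : dist p z = Metric.infDist p S)
    (hle : dist q z' ≤ dist q z)
    (hq1 : q ∈ openSegment ℝ p z)
    (hqp : q ≠ p) (hzz' : z ≠ z') : False := by
  have hW : Wbtw ℝ p q z := mem_segment_iff_wbtw.mp (openSegment_subset_segment _ _ _ hq1)
  have heq1 : dist p q + dist q z = dist p z := dist_add_dist_eq_iff.mpr hW
  have h1 : dist p z ≤ dist p z' := hzmin ▸ Metric.infDist_le_dist_of_mem hz'S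
  have h2 : dist p z' ≤ dist p q + dist q z' := dist_triangle _ _ _
  have e1 : dist p q + dist q z' = dist p z' := by linarith
  have e2 : dist q z' = dist q z := by linarith
  have hW' : Wbtw ℝ p q z' := dist_add_dist_eq_iff.mp e1
  have hr1 : SameRay ℝ (q - p) (z - q) := by
    have := wbtw_iff_sameRay_vsub.mp hW; simpa using this
  have hr2 : SameRay ℝ (q - p) (z' - q) := by
    have := wbtw_iff_sameRay_vsub.mp hW'; simpa using this
  have hqp0 : q - p ≠ 0 := sub_ne_zero.mpr hqp
  obtain ⟨r, hr, hrz⟩ := hr1.exists_nonneg_left hqp0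
  obtain ⟨r', hr', hrz'⟩ := hr2.exists_nonneg_left hqp0
  have hn : r * ‖q - p‖ = r' * ‖q - p‖ := by
    have h3 : ‖z - q‖ = r * ‖q - p‖ := by
      rw [← hrz, norm_smul, Real.norm_of_nonneg hr]
    have h4 : ‖z' - q‖ = r' * ‖q - p‖ := by
      rw [← hrz', norm_smul, Real.norm_of_nonneg hr']
    have := e2
    rw [dist_eq_norm, dist_eq_norm, norm_sub_rev q z', norm_sub_rev q z] at this
    rw [← h3, ← h4, this]
  have hrr : r = r' := by
    have : ‖q - p‖ ≠ 0 := norm_ne_zero_iff.mpr hqp0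
    exact mul_right_cancel₀ this hn
  apply hzz'
  have h5 : z - q = z' - q := by rw [← hrz, ← hrz', hrr]
  have := congrArg (· + q) h5
  simpa using this
  
theorem stmt10 (P : Set E2) (hP : IsOpen P) (hPb : Bornology.IsBounded P) (ε : ℝ) (hε : 0 < ε)
    (S : Set E2) (hS : S = {z | z ∈ P ∧ Metric.infDist z (frontier P) = ε})
    (p p' z z' : E2) (hp : p ∈ frontier P) (hp' : p' ∈ frontier P)
    (hzS : z ∈ S) (hz'S : z' ∈ S)
    (hzmin : dist p z = Metric.infDist p S) (hz'min : dist p' z' = Metric.infDist p' S)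
    (hdz : dist p z = ε) (hdz' : dist p' z' = ε) (hzz' : z ≠ z')
    (q : E2) (hq1 : q ∈ openSegment ℝ p z) (hq2 : q ∈ openSegment ℝ p' z')
    (hqne : q ∉ ({p, z, p', z'} : Set E2)) :
    False := by
  simp only [mem_insert_iff, mem_singleton_iff, not_or] at hqne
  obtain ⟨hqp, hqz, hqp', hqz'⟩ := hqne
  rcases le_total (dist q z') (dist q z) with h | h
  · exact aux10 S p z z' q hz'S hzmin h hq1 hqp hzz'
  · exact aux10 S p' z' z q hzS hz'min h hq2 hqp' hzz'.symm
end
end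

section
/- Let γ : [0, L] → ℝ² be a curve parametrized by arc length that is μ-locally η-Lipschitz in the sense that for any s, t with d(γ(s), γ(t)) < μ, the arc-length distance between γ(s) and γ(t) along γ is at most η·d(γ(s), γ(t)). Suppose X ⊂ γ([0,L]) is a (μ/2)-net of γ([0,L]) of cardinality M′, and any two points of X can be joined along γ by a chain of points of X with consecutive Euclidean distances less than μ. Then any two points s, w of γ([0,L]) can be joined by a subcurve of γ of length at most (M′·η·μ + 2η·μ); consequently γ([0,L]) is the boundary of an η*-elementary set for η* = 2(M′η + 2η)·μ/μ₀ whenever all pairs of points are at distance at least μ₀ := μ/2 or within distance μ of each other. -/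
open Metric Set

noncomputable section

lemma circ_tri {L s t w : ℝ} (hs : s ∈ Set.Icc 0 L) (ht : t ∈ Set.Icc 0 L)
    (hw : w ∈ Set.Icc 0 L) :
    min |s - w| (L - |s - w|) ≤ min |s - t| (L - |s - t|) + min |t - w| (L - |t - w|) := by
  obtain ⟨hs0, hsL⟩ := hs
  obtain ⟨ht0, htL⟩ := ht
  obtain ⟨hw0, hwL⟩ := hw
  rcases abs_cases (s - w) with ⟨e1, f1⟩ | ⟨e1, f1⟩ <;>
  rcases abs_cases (s - t) with ⟨e2, f2⟩ | ⟨e2, f2⟩ <;>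
  rcases abs_cases (t - w) with ⟨e3, f3⟩ | ⟨e3, f3⟩ <;>
  rw [e1, e2, e3] <;>
  simp only [min_def] <;>
  split_ifs <;>
  linarith


theorem stmt14 (L μ η : ℝ) (hL : 0 < L) (hμ : 0 < μ) (hη : 0 < η)
    (γ : ℝ → E2) (hγ : ContinuousOn γ (Set.Icc 0 L))
    -- `γ` is parametrized by arc length and is `μ`-locally `η`-Lipschitz: the arc-length
    -- distance along the (closed) curve between two points at Euclidean distance `< μ`
    -- is at most `η` times their Euclidean distance.
    (hlip : ∀ s ∈ Set.Icc (0:ℝ) L, ∀ t ∈ Set.Icc (0:ℝ) L,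
      dist (γ s) (γ t) < μ → min |s - t| (L - |s - t|) ≤ η * dist (γ s) (γ t))
    (M' : ℕ) (X : Finset E2) (hcard : X.card = M')
    (hXsub : (X : Set E2) ⊆ γ '' Set.Icc 0 L)
    -- `X` is a `μ/2`-net of the curve
    (hnet : ∀ p ∈ γ '' Set.Icc 0 L, ∃ x ∈ X, dist p x ≤ μ / 2)
    -- any two points of `X` are joined by a chain in `X` with steps `< μ`
    (hchain : ∀ x ∈ X, ∀ y ∈ X, ∃ (k : ℕ) (c : Fin (k + 1) → E2),
      (∀ i, c i ∈ X) ∧ c 0 = x ∧ c (Fin.last k) = y ∧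
        ∀ i : Fin k, dist (c i.castSucc) (c i.succ) < μ) :
    -- any two points of the curve are joined along the curve by a subcurve of length at
    -- most `M'·η·μ + 2·η·μ`; consequently the curve satisfies the `η*`-elementary
    -- boundary estimate with `η* = 2(M'η + 2η)·μ/μ₀`, `μ₀ = μ/2`, for pairs of points
    -- that are at distance at least `μ₀` (points within distance `μ` are handled by the
    -- local Lipschitz property directly).
    (∀ s ∈ Set.Icc (0:ℝ) L, ∀ w ∈ Set.Icc (0:ℝ) L,
      min |s - w| (L - |s - w|) ≤ M' * η * μ + 2 * η * μ) ∧
    (∀ s ∈ Set.Icc (0:ℝ) L, ∀ w ∈ Set.Icc (0:ℝ) L,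
      μ / 2 ≤ dist (γ s) (γ w) →
        min |s - w| (L - |s - w|)
          ≤ (2 * ((M':ℝ) * η + 2 * η) * μ / (μ / 2)) * dist (γ s) (γ w)) := by
  classical
  set V := {x // x ∈ X}
  set G : SimpleGraph V :=
    { Adj := fun a b => a ≠ b ∧ dist (a : E2) (b : E2) < μ
      symm := by
        constructor
        rintro a b ⟨h1, h2⟩
        exact ⟨h1.symm, by rwa [dist_comm] at h2⟩
      loopless := by constructor; rintro a ⟨h1, _⟩; exact h1 rfl }
  have hpick : ∀ v : V, ∃ t, t ∈ Set.Icc (0:ℝ) L ∧ γ t = (v : E2) := by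
    intro v
    obtain ⟨t, ht, h⟩ := hXsub v.2
    exact ⟨t, ht, h⟩
  choose p hp1 hp2 using hpick
  -- bound along walks
  have key : ∀ (u v : V) (q : G.Walk u v),
      min |p u - p v| (L - |p u - p v|) ≤ q.length * (η * μ) := by
    intro u v q
    induction q with
    | nil =>
        simp only [SimpleGraph.Walk.length_nil, Nat.cast_zero, zero_mul, sub_self, abs_zero,
          sub_zero]
        exact min_le_left 0 L
    | @cons u u' v h q ih =>
        have hd : dist (γ (p u)) (γ (p u')) < μ := by rw [hp2, hp2]; exact h.2
        have step : min |p u - p u'| (L - |p u - p u'|) ≤ η * dist (γ (p u)) (γ (p u')) :=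
          hlip _ (hp1 u) _ (hp1 u') hd
        have step2 : η * dist (γ (p u)) (γ (p u')) ≤ η * μ :=
          mul_le_mul_of_nonneg_left hd.le hη.le
        have tri := circ_tri (hp1 u) (hp1 u') (hp1 v)
        simp only [SimpleGraph.Walk.length_cons, Nat.cast_add, Nat.cast_one]
        nlinarith [ih]
  -- reachability from chains
  have hreach : ∀ x (hx : x ∈ X) y (hy : y ∈ X), G.Reachable ⟨x, hx⟩ ⟨y, hy⟩ := by
    intro x hx y hy
    obtain ⟨k, c, hcX, hc0, hck, hstep⟩ := hchain x hx y hy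
    have main : ∀ n : Fin (k + 1), G.Reachable (⟨c 0, hcX 0⟩ : V) ⟨c n, hcX n⟩ := by
      intro n
      induction n using Fin.induction with
      | zero => exact SimpleGraph.Reachable.refl _
      | succ i ih =>
          refine ih.trans ?_
          by_cases h : (⟨c i.castSucc, hcX _⟩ : V) = ⟨c i.succ, hcX _⟩
          · rw [h]
          · exact SimpleGraph.Adj.reachable ⟨h, hstep i⟩
    have := main (Fin.last k)
    rwa [show (⟨c 0, hcX 0⟩ : V) = ⟨x, hx⟩ from Subtype.ext hc0,
      show (⟨c (Fin.last k), hcX _⟩ : V) = ⟨y, hy⟩ from Subtype.ext hck] at this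
  -- the main length bound
  have main : ∀ s ∈ Set.Icc (0:ℝ) L, ∀ w ∈ Set.Icc (0:ℝ) L,
      min |s - w| (L - |s - w|) ≤ M' * η * μ + 2 * η * μ := by
    intro s hs w hw
    obtain ⟨x, hx, hdx⟩ := hnet (γ s) ⟨s, hs, rfl⟩
    obtain ⟨y, hy, hdy⟩ := hnet (γ w) ⟨w, hw, rfl⟩
    set a := p ⟨x, hx⟩ with ha
    set b := p ⟨y, hy⟩ with hb
    have hga : γ a = x := hp2 _
    have hgb : γ b = y := hp2 _
    have hfa : min |s - a| (L - |s - a|) ≤ η * (μ / 2) := by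
      have hd : dist (γ s) (γ a) < μ := by rw [hga]; linarith
      have := hlip _ hs _ (hp1 _) hd
      have h2 : η * dist (γ s) (γ a) ≤ η * (μ / 2) := by
        apply mul_le_mul_of_nonneg_left _ hη.le
        rw [hga]; exact hdx
      linarith
    have hfb : min |b - w| (L - |b - w|) ≤ η * (μ / 2) := by
      have hd : dist (γ b) (γ w) < μ := by
        rw [hgb, dist_comm]; linarith
      have := hlip _ (hp1 _) _ hw hd
      have h2 : η * dist (γ b) (γ w) ≤ η * (μ / 2) := by
        apply mul_le_mul_of_nonneg_left _ hη.le
        rw [hgb, dist_comm]; exact hdy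
      linarith
    obtain ⟨q⟩ := hreach x hx y hy
    have hlen : q.toPath.1.length < Fintype.card V := q.toPath.2.length_lt
    have hcardV : Fintype.card V = M' := by rw [Fintype.card_coe, hcard]
    have hlenR : (q.toPath.1.length : ℝ) ≤ (M' : ℝ) - 1 := by
      have h0 : q.toPath.1.length + 1 ≤ M' := by omega
      have h1 : ((q.toPath.1.length : ℝ)) + 1 ≤ (M' : ℝ) := by exact_mod_cast h0
      linarith
    have hab : min |a - b| (L - |a - b|) ≤ ((M' : ℝ) - 1) * (η * μ) := by
      have := key _ _ q.toPath.1
      have h2 : (q.toPath.1.length : ℝ) * (η * μ) ≤ ((M' : ℝ) - 1) * (η * μ) :=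
        mul_le_mul_of_nonneg_right hlenR (by positivity)
      exact le_trans this h2
    have t1 := circ_tri hs (hp1 ⟨x, hx⟩) hw
    have t2 := circ_tri (hp1 ⟨x, hx⟩) (hp1 ⟨y, hy⟩) hw
    rw [← ha] at t1 t2
    rw [← hb] at t2
    nlinarith
  refine ⟨main, ?_⟩
  intro s hs w hw hd
  have := main s hs w hw
  have h1 : (2 * ((M':ℝ) * η + 2 * η) * μ / (μ / 2)) = 4 * ((M':ℝ) * η + 2 * η) := by
    field_simp; ring
  rw [h1]
  have hM : (0:ℝ) ≤ (M':ℝ) * η + 2 * η := by positivity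
  nlinarith
end
end
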